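/- For all integers t, l, n ≥ 1, beth(t, l, n) ≤ beth(2^s, l+1, 2^s·(n−1)+1), where s = ⌈log₂ t⌉. -/

import Mathlib

/-- `u` is lexicographically greater than `v`: at the first position where they
differ, `u` has the larger letter (words where one is a prefix of the other are
incomparable). -/
def WordGt {α : Type*} [LinearOrder α] (u v : List α) : Prop :=
  List.Lex (· < ·) v u ∧ ¬ v <+: u

/-- `wpow z k` is the concatenation of `k` copies of the word `z`. -/
def wpow {α : Type*} (z : List α) : ℕ → List α
  | 0 => []
  | k + 1 => z ++ wpow z k

/-- A word is noncyclic (primitive) if it is nonempty and is not a proper power. -/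
def Noncyclic {α : Type*} (z : List α) : Prop :=
  z ≠ [] ∧ ∀ (v : List α) (k : ℕ), 2 ≤ k → z ≠ wpow v k

/-- `W` is `n`-divisible: `W = W₀W₁⋯Wₙ` with `W₁,…,Wₙ` nonempty and in strictly
decreasing lexicographic order. -/
def NDivisible {α : Type*} [LinearOrder α] (W : List α) (n : ℕ) : Prop :=
  ∃ (W₀ : List α) (f : Fin n → List α),
    W = W₀ ++ (List.ofFn f).flatten ∧
    (∀ i, f i ≠ []) ∧
    (∀ i j, i < j → WordGt (f i) (f j))

/-- `W` is strongly `n`-divisible over the set of words `Z` (with boundary `2n`):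
it is `n`-divisible with each `Wᵢ` (`1 ≤ i ≤ n`) beginning with `zᵢ^{2n}` for
pairwise distinct `z₁,…,zₙ ∈ Z`. -/
def StronglyNDivisible {α : Type*} [LinearOrder α] (W : List α) (n : ℕ)
    (Z : Set (List α)) : Prop :=
  ∃ (W₀ : List α) (f : Fin n → List α) (z : Fin n → List α),
    W = W₀ ++ (List.ofFn f).flatten ∧
    (∀ i, f i ≠ []) ∧
    (∀ i j, i < j → WordGt (f i) (f j)) ∧
    (∀ i, z i ∈ Z ∧ wpow (z i) (2 * n) <+: f i) ∧
    Function.Injective z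

/-- `u` occurs as a subword of `W` starting at position `p`. -/
def OccursAt {α : Type*} (W u : List α) (p : ℕ) : Prop :=
  ∃ pre suf : List α, pre.length = p ∧ W = pre ++ u ++ suf

/-- The sequence `c` of noncyclic words of length `t` over an `l`-letter alphabet,
no two of which are cyclic rotations of one another, is `n`-good: the partial
order on pairs `(i, r)` given by `(i₁,r₁) ≺ (i₂,r₂)` iff `i₁ < i₂` and the
rotation of `c i₁` by `r₁` is lexicographically smaller than the rotation of
`c i₂` by `r₂`, has no antichain of size `n`. -/
def IsGoodSeq (t l n : ℕ) {N : ℕ} (c : Fin N → List (Fin l)) : Prop :=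
  (∀ i, Noncyclic (c i)) ∧
  (∀ i, (c i).length = t) ∧
  (∀ i j, i ≠ j → ¬ List.IsRotated (c i) (c j)) ∧
  ¬ ∃ g : Fin n → Fin N × Fin t, Function.Injective g ∧
      ∀ a b : Fin n,
        ¬ ((g a).1 < (g b).1 ∧
          List.Lex (· < ·) ((c (g a).1).rotate (g a).2) ((c (g b).1).rotate (g b).2))

/-- `beth t l n` is the maximal length of an `n`-good sequence of noncyclic
words of length `t` over an `l`-letter alphabet, no two of which are cyclic
rotations of one another. -/
noncomputable def beth (t l n : ℕ) : ℕ :=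
  sSup {N | ∃ c : Fin N → List (Fin l), IsGoodSeq t l n c}



private lemma lex_cons_iff' {α : Type*} [LinearOrder α] {a b : α} {l₁ l₂ : List α} :
    List.Lex (· < ·) (a :: l₁) (b :: l₂) ↔ a < b ∨ (a = b ∧ List.Lex (· < ·) l₁ l₂) := by
  constructor
  · intro h
    cases h with
    | rel h => exact Or.inl h
    | cons h => exact Or.inr ⟨rfl, h⟩
  · rintro (h | ⟨rfl, h⟩)
    · exact List.Lex.rel h
    · exact List.Lex.cons h

private lemma lex_append_iff {α : Type*} [LinearOrder α] :
    ∀ (u₁ u₂ b₁ b₂ : List α), u₁.length = u₂.length →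
      (List.Lex (· < ·) (u₁ ++ b₁) (u₂ ++ b₂) ↔
        List.Lex (· < ·) u₁ u₂ ∨ (u₁ = u₂ ∧ List.Lex (· < ·) b₁ b₂))
  | [], [], b₁, b₂, _ => by
    rw [List.nil_append, List.nil_append]
    constructor
    · intro h; exact Or.inr ⟨rfl, h⟩
    · rintro (h | ⟨-, h⟩)
      · cases h
      · exact h
  | [], b :: u₂, _, _, hl => by simp at hl
  | a :: u₁, [], _, _, hl => by simp at hl
  | a :: u₁, b :: u₂, b₁, b₂, hl => by
    rw [List.cons_append, List.cons_append, lex_cons_iff', lex_cons_iff',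
      lex_append_iff u₁ u₂ b₁ b₂ (by simpa using hl)]
    simp only [List.cons.injEq]
    tauto

private lemma lex_map {α β : Type*} [LinearOrder α] [LinearOrder β] {f : α → β}
    (hf : ∀ a b, a < b → f a < f b) :
    ∀ {u v : List α}, List.Lex (· < ·) u v →
      List.Lex (· < ·) (u.map f) (v.map f) := by
  intro u v h
  induction h with
  | nil => simp only [List.map_nil, List.map_cons]; exact List.Lex.nil
  | cons _ ih => simp only [List.map_cons]; exact List.Lex.cons ih
  | rel h => simp only [List.map_cons]; exact List.Lex.rel (hf _ _ h)

private lemma wpow_length {α : Type*} (v : List α) : ∀ k, (wpow v k).length = k * v.length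
  | 0 => by simp [wpow]
  | k + 1 => by
    simp [wpow, wpow_length v k, Nat.succ_mul, Nat.add_comm]

private lemma wpow_succ_right {α : Type*} (v : List α) : ∀ k, wpow v (k + 1) = wpow v k ++ v
  | 0 => by simp [wpow]
  | k + 1 => by
    show v ++ wpow v (k + 1) = (v ++ wpow v k) ++ v
    rw [wpow_succ_right v k, List.append_assoc]

private lemma map_wpow {α β : Type*} (f : α → β) (v : List α) :
    ∀ k, (wpow v k).map f = wpow (v.map f) k
  | 0 => by simp [wpow]
  | k + 1 => by simp [wpow, map_wpow f v k]

private lemma getElem_idx_congr {α : Type*} (L : List α) {a b : ℕ} (h : a = b)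
    (ha : a < L.length) : L[a]'ha = L[b]'(h ▸ ha) := by subst h; rfl

private lemma wpow_getElem {α : Type*} (v : List α) :
    ∀ (k x : ℕ) (hx : x < (wpow v k).length) (hv : 0 < v.length),
      (wpow v k)[x]'hx = v[x % v.length]'(Nat.mod_lt x hv)
  | 0, x, hx, _ => by simp [wpow] at hx
  | k + 1, x, hx, hv => by
    rw [List.getElem_of_eq (show wpow v (k + 1) = v ++ wpow v k from rfl)]
    by_cases h : x < v.length
    · rw [List.getElem_append_left h]
      congr 1
      exact (Nat.mod_eq_of_lt h).symm
    · push_neg at h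
      have hlx : x - v.length < (wpow v k).length := by
        have h1 : x < (wpow v (k+1)).length := hx
        rw [wpow_length] at h1 ⊢
        have h2 : (k + 1) * v.length = k * v.length + v.length := by ring
        omega
      rw [List.getElem_append_right h, wpow_getElem v k (x - v.length) hlx hv]
      congr 1
      exact (Nat.mod_eq_sub_mod h).symm

private lemma good_zero (t l n : ℕ) (hn : 1 ≤ n) :
    ∃ c : Fin 0 → List (Fin l), IsGoodSeq t l n c := by
  refine ⟨fun i => i.elim0, fun i => i.elim0, fun i => i.elim0, fun i => i.elim0, ?_⟩
  rintro ⟨g, -, -⟩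
  exact (g ⟨0, hn⟩).1.elim0

private lemma beth_bddAbove (t l n : ℕ) (hl : 0 < l) :
    BddAbove {N | ∃ c : Fin N → List (Fin l), IsGoodSeq t l n c} := by
  refine ⟨l ^ t, ?_⟩
  rintro N ⟨c, hcyc, hlen, hrot, -⟩
  have : Nonempty (Fin l) := ⟨⟨0, hl⟩⟩
  set F : Fin N → (Fin t → Fin l) := fun i k => (c i).get (Fin.cast (hlen i).symm k) with hF
  have hFinj : Function.Injective F := by
    intro i j hij
    by_contra hne
    apply hrot i j hne
    have hceq : c i = c j := by
      apply List.ext_get (by rw [hlen i, hlen j])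
      intro k h1 h2
      have := congrFun hij ⟨k, by rwa [← hlen i]⟩
      simpa [hF] using this
    rw [hceq]
  have := Fintype.card_le_of_injective F hFinj
  simpa using this

private lemma good_pad {t l n N t' : ℕ} (ht : 1 ≤ t) (hn : 1 ≤ n) (htt' : t ≤ t')
    {c : Fin N → List (Fin l)} (hc : IsGoodSeq t l n c) :
    IsGoodSeq t' (l + 1) (t' * (n - 1) + 1)
      (fun i => (c i).map Fin.castSucc ++ List.replicate (t' - t) (Fin.last l)) := by
  obtain ⟨hcyc, hlen, hrot, hanti⟩ := hc
  set ι : Fin l → Fin (l + 1) := Fin.castSucc with hι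
  set T : Fin (l + 1) := Fin.last l with hT
  set m := t' - t with hm
  set c' : Fin N → List (Fin (l + 1)) :=
    fun i => (c i).map ι ++ List.replicate m T with hc'
  have ht'pos : 0 < t' := lt_of_lt_of_le ht htt'
  have len_u : ∀ i, ((c i).map ι).length = t := fun i => by simp [hlen i]
  have len_c' : ∀ i, (c' i).length = t' := fun i => by
    simp [hc', hlen i]; omega
  have hιT : ∀ a : Fin l, ι a ≠ T := fun a => (Fin.castSucc_lt_last a).ne
  have getT : ∀ (i : Fin N) (x : ℕ) (hx : x < t'),
      ((c' i)[x]'(by rw [len_c' i]; exact hx) = T ↔ t ≤ x) := by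
    intro i x hx
    by_cases hxt : x < t
    · rw [List.getElem_append_left (by rw [len_u i]; exact hxt)]
      rw [List.getElem_map]
      constructor
      · intro hcontra; exact absurd hcontra (hιT _)
      · intro hcontra; omega
    · rw [List.getElem_append_right (by rw [len_u i]; omega)]
      rw [List.getElem_replicate]
      simp only [eq_self_iff_true, true_iff]
      omega
  -- the lex transfer, for a fixed rotation amount r₀ < t'
  have hmono : ∀ a b : Fin l, a < b → ι a < ι b := fun a b h => by
    simpa [hι] using h
  refine ⟨?_, len_c', ?_, ?_⟩
  -- noncyclic
  · intro i
    constructor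
    · intro hnil
      have := len_c' i
      rw [hnil] at this
      simp at this
      omega
    · intro v k hk heq
      have hlenv : t' = k * v.length := by
        rw [← len_c' i, heq, wpow_length]
      have hv : v ≠ [] := by
        rintro rfl
        simp at hlenv
        omega
      have hp1 : 1 ≤ v.length := List.length_pos_iff.mpr hv
      have h2p : 2 * v.length ≤ k * v.length := Nat.mul_le_mul_right _ hk
      have hpt' : v.length < t' := by omega
      by_cases hm0 : m = 0
      · -- no padding : t = t'
        have hc'eq : c' i = (c i).map ι := by simp [hc', hm0]
        obtain ⟨k', rfl⟩ : ∃ k', k = k' + 1 := ⟨k - 1, by omega⟩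
        have hw1 : wpow v (k' + 1) = v ++ wpow v k' := rfl
        have hsplit : (c i).map ι = v ++ wpow v k' := by
          rw [← hc'eq, heq, hw1]
        have hveq : v = ((c i).take v.length).map ι := by
          rw [List.map_take, hsplit, List.take_left' rfl]
        apply hcyc i |>.2 ((c i).take v.length) (k' + 1) hk
        have hmapinj : Function.Injective (List.map ι) :=
          List.map_injective_iff.mpr (Fin.castSucc_injective l)
        apply hmapinj
        rw [map_wpow, ← hveq, ← hc'eq, heq]
      · -- padding present
        obtain ⟨k', rfl⟩ : ∃ k', k = k' + 2 := ⟨k - 2, by omega⟩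
        have gv : ∀ (x : ℕ) (hx : x < t'),
            (c' i)[x]'(by rw [len_c' i]; exact hx) =
              v[x % v.length]'(Nat.mod_lt x (by omega)) := by
          intro x hx
          have h0 : x < (wpow v (k' + 2)).length := by
            rw [wpow_length, ← hlenv]; exact hx
          rw [List.getElem_of_eq heq, wpow_getElem v (k' + 2) x h0 (by omega)]
        have m1 : (t' - 1) % v.length = v.length - 1 := by
          have h2 : t' = (v.length - 1) + 1 + (k' + 1) * v.length := by
            have h3 : (k' + 2) * v.length = (k' + 1) * v.length + v.length := by ring
            omega
          have h4 : t' - 1 = (v.length - 1) + (k' + 1) * v.length := by omega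
          rw [h4, Nat.add_mul_mod_self_right, Nat.mod_eq_of_lt (by omega)]
        have m2 : (v.length - 1) % v.length = v.length - 1 :=
          Nat.mod_eq_of_lt (by omega)
        have m3 : v.length % v.length = 0 := Nat.mod_self _
        have m4 : (0 : ℕ) % v.length = 0 := Nat.zero_mod _
        have q1 : t ≤ v.length - 1 := by
          apply (getT i (v.length - 1) (by omega)).mp
          have e1 := gv (v.length - 1) (by omega)
          have e2 := gv (t' - 1) (by omega)
          have e3 := getElem_idx_congr v
            (show (v.length - 1) % v.length = (t' - 1) % v.length by rw [m1, m2])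
            (Nat.mod_lt _ (by omega))
          exact e1.trans (e3.trans (e2.symm.trans
            ((getT i (t' - 1) (by omega)).mpr (by omega))))
        have q2 : t ≤ 0 := by
          apply (getT i 0 (by omega)).mp
          have e1 := gv 0 (by omega)
          have e2 := gv v.length (by omega)
          have e3 := getElem_idx_congr v
            (show (0 : ℕ) % v.length = v.length % v.length by rw [m3, m4])
            (Nat.mod_lt _ (by omega))
          exact e1.trans (e3.trans (e2.symm.trans
            ((getT i v.length (by omega)).mpr (by omega))))
        omega
  -- pairwise not rotated
  · intro i j hij hrotd
    obtain ⟨r, hr⟩ := hrotd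
    rw [← List.rotate_mod] at hr
    set r' := r % (c' i).length with hr'def
    have hrt : r' < t' := by
      rw [hr'def, len_c' i]
      exact Nat.mod_lt _ (by omega)
    by_cases hm0 : m = 0
    · -- no padding: rotation commutes with map
      have hc'eq : ∀ x, c' x = (c x).map ι := fun x => by simp [hc', hm0]
      apply hrot i j hij
      refine ⟨r', ?_⟩
      have hmapinj : Function.Injective (List.map ι) :=
        List.map_injective_iff.mpr (Fin.castSucc_injective l)
      apply hmapinj
      rw [List.map_rotate, ← hc'eq, ← hc'eq, hr]
    · have hpoint : ∀ (x : ℕ) (hx : x < t'),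
          (c' j)[x]'(by rw [len_c' j]; exact hx) =
            (c' i)[(x + r') % t']'(by rw [len_c' i]; exact Nat.mod_lt _ (by omega)) := by
        intro x hx
        rw [List.getElem_of_eq hr.symm]
        rw [List.getElem_rotate]
        exact getElem_idx_congr _ (by rw [len_c' i]) _
      rcases Nat.eq_zero_or_pos r' with hr0 | hr0
      · -- r' = 0 : c' i = c' j, contradiction with not rotated
        rw [hr0, List.rotate_zero] at hr
        apply hrot i j hij
        have := List.append_inj hr (by rw [len_u i, len_u j])
        have hmapinj : Function.Injective (List.map ι) :=
          List.map_injective_iff.mpr (Fin.castSucc_injective l)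
        rw [hmapinj this.1]
      · rcases le_or_gt r' t with hrle | hrgt
        · -- look at last position
          have hmod : (t' - 1 + r') % t' = r' - 1 := by
            have h0 : t' - 1 + r' = t' + (r' - 1) := by omega
            rw [h0, Nat.add_mod_left, Nat.mod_eq_of_lt (by omega)]
          have e := hpoint (t' - 1) (by omega)
          have eidx := getElem_idx_congr (c' i) hmod
            (by rw [len_c' i]; exact Nat.mod_lt _ (by omega))
          have eT : (c' j)[t' - 1]'(by rw [len_c' j]; omega) = T :=
            (getT j (t' - 1) (by omega)).mpr (by omega)
          have hfin : (c' i)[r' - 1]'(by rw [len_c' i]; omega) = T :=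
            eidx.symm.trans (e.symm.trans eT)
          have := (getT i (r' - 1) (by omega)).mp hfin
          omega
        · -- look at first position
          have hmod : (0 + r') % t' = r' := by
            rw [Nat.zero_add, Nat.mod_eq_of_lt hrt]
          have e := hpoint 0 (by omega)
          have eidx := getElem_idx_congr (c' i) hmod
            (by rw [len_c' i]; exact Nat.mod_lt _ (by omega))
          have eT : (c' i)[r']'(by rw [len_c' i]; omega) = T :=
            (getT i r' hrt).mpr (by omega)
          have hfin : (c' j)[0]'(by rw [len_c' j]; omega) = T :=
            e.trans (eidx.trans eT)
          have := (getT j 0 (by omega)).mp hfin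
          omega
  -- no antichain of size t' * (n-1) + 1
  · rintro ⟨g, ginj, gprop⟩
    have hcard : Fintype.card (Fin t') * (n - 1) <
        Fintype.card (Fin (t' * (n - 1) + 1)) := by
      simp
    obtain ⟨r₀, hr₀⟩ :=
      Fintype.exists_lt_card_fiber_of_mul_lt_card (fun a => (g a).2) hcard
    obtain ⟨B, hB, hBcard⟩ := Finset.exists_subset_card_eq
      (show n ≤ (Finset.filter (fun x => (g x).2 = r₀) Finset.univ).card by omega)
    set e := B.orderIsoOfFin hBcard with he
    set idx : Fin n → Fin (t' * (n - 1) + 1) := fun a => (e a).1 with hidx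
    have idxinj : Function.Injective idx := by
      intro a b hab
      exact e.injective (Subtype.ext hab)
    have hsnd : ∀ a, (g (idx a)).2 = r₀ := by
      intro a
      have hmem := hB (e a).2
      exact (Finset.mem_filter.mp hmem).2
    have hr₀t' : (r₀ : ℕ) < t' := r₀.2
    set q₀ : Fin t := if h : (r₀ : ℕ) < t then ⟨r₀, h⟩ else ⟨0, ht⟩ with hq₀
    -- the key lex transfer
    have transfer : ∀ x y : Fin N,
        List.Lex (· < ·) ((c x).rotate (q₀ : ℕ)) ((c y).rotate (q₀ : ℕ)) →
        List.Lex (· < ·) ((c' x).rotate (r₀ : ℕ)) ((c' y).rotate (r₀ : ℕ)) := by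
      intro x y hlex
      by_cases hq : (r₀ : ℕ) < t
      · have hq₀v : (q₀ : ℕ) = (r₀ : ℕ) := by simp [hq₀, hq]
        have formulaA : ∀ z : Fin N, (c' z).rotate (r₀ : ℕ) =
            ((c z).drop r₀).map ι ++
              (List.replicate m T ++ ((c z).take r₀).map ι) := by
          intro z
          rw [List.rotate_eq_drop_append_take (by rw [len_c' z]; omega)]
          show ((c z).map ι ++ List.replicate m T).drop r₀ ++
              ((c z).map ι ++ List.replicate m T).take r₀ = _
          rw [List.drop_append, List.take_append]
          rw [len_u z]
          have h0 : (r₀ : ℕ) - t = 0 := by omega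
          rw [h0]
          simp [List.map_drop, List.map_take, List.append_assoc]
        rw [hq₀v, List.rotate_eq_drop_append_take (by rw [hlen x]; omega),
          List.rotate_eq_drop_append_take (by rw [hlen y]; omega)] at hlex
        have hdec := (lex_append_iff _ _ _ _
          (by rw [List.length_drop, List.length_drop, hlen x, hlen y])).mp hlex
        rw [formulaA x, formulaA y]
        apply (lex_append_iff _ _ _ _
          (by simp [hlen x, hlen y])).mpr
        rcases hdec with h | ⟨heq, h⟩
        · exact Or.inl (lex_map hmono h)
        · refine Or.inr ⟨by rw [heq], ?_⟩
          apply (lex_append_iff _ _ _ _ rfl).mpr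
          exact Or.inr ⟨rfl, lex_map hmono h⟩
      · have hq₀v : (q₀ : ℕ) = 0 := by simp [hq₀, hq]
        have formulaB : ∀ z : Fin N, (c' z).rotate (r₀ : ℕ) =
            List.replicate (t' - r₀) T ++
              ((c z).map ι ++ List.replicate ((r₀ : ℕ) - t) T) := by
          intro z
          rw [List.rotate_eq_drop_append_take (by rw [len_c' z]; omega)]
          show ((c z).map ι ++ List.replicate m T).drop r₀ ++
              ((c z).map ι ++ List.replicate m T).take r₀ = _
          rw [List.drop_append, List.take_append]
          rw [len_u z]
          rw [List.drop_eq_nil_of_le (by rw [len_u z]; omega)]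
          rw [List.take_of_length_le (by rw [len_u z]; omega)]
          rw [List.drop_replicate, List.take_replicate]
          have h1 : m - ((r₀ : ℕ) - t) = t' - r₀ := by omega
          have h2 : min ((r₀ : ℕ) - t) m = (r₀ : ℕ) - t := by omega
          rw [h1, h2, List.nil_append]
        rw [hq₀v, List.rotate_zero, List.rotate_zero] at hlex
        rw [formulaB x, formulaB y]
        apply (lex_append_iff _ _ _ _ rfl).mpr
        refine Or.inr ⟨rfl, ?_⟩
        apply (lex_append_iff _ _ _ _ (by rw [len_u x, len_u y])).mpr
        exact Or.inl (lex_map hmono hlex)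
    apply hanti
    refine ⟨fun a => ((g (idx a)).1, q₀), ?_, ?_⟩
    · intro a b hab
      apply idxinj
      apply ginj
      have h1 : (g (idx a)).1 = (g (idx b)).1 := by
        have h0 := congrArg Prod.fst hab
        simpa using h0
      have h2 : (g (idx a)).2 = (g (idx b)).2 := by rw [hsnd a, hsnd b]
      exact Prod.ext h1 h2
    · rintro a b ⟨h1, h2⟩
      apply gprop (idx a) (idx b)
      refine ⟨h1, ?_⟩
      rw [hsnd a, hsnd b]
      exact transfer _ _ h2

/-- For all integers `t, l, n ≥ 1`,
`beth(t, l, n) ≤ beth(2^s, l+1, 2^s·(n−1)+1)` where `s = ⌈log₂ t⌉` is the least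
integer with `2^s ≥ t`. -/
theorem beth_pow_two_period (t l n s : ℕ) (ht : 1 ≤ t) (hl : 1 ≤ l) (hn : 1 ≤ n)
    (hs : t ≤ 2 ^ s) (hs_min : ∀ s' : ℕ, t ≤ 2 ^ s' → s ≤ s') :
    beth t l n ≤ beth (2 ^ s) (l + 1) (2 ^ s * (n - 1) + 1) := by
  unfold beth
  apply csSup_le
  · exact ⟨0, good_zero t l n hn⟩
  · rintro N ⟨c, hc⟩
    apply le_csSup (beth_bddAbove (2 ^ s) (l + 1) (2 ^ s * (n - 1) + 1) (by omega))
    exact ⟨_, good_pad ht hn hs hc⟩
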